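/- A simple graph G is a line graph of a multigraph if and only if its twin-quotient H is isomorphic to the line graph of some simple graph. -/

import Mathlib

/-- Two vertices are *true twins* if they are adjacent and have the same
closed neighborhood. -/
def TrueTwins {V : Type*} (G : SimpleGraph V) (u v : V) : Prop :=
  G.Adj u v ∧ ∀ w, w ≠ u → w ≠ v → (G.Adj w u ↔ G.Adj w v)

/-- The twin equivalence: `u = v` or `u` and `v` are true twins. -/
def twinSetoid {V : Type*} (G : SimpleGraph V) : Setoid V where
  r u v := u = v ∨ TrueTwins G u v
  iseqv := by
    constructor
    · intro u; exact Or.inl rfl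
    · rintro u v (rfl | ⟨hadj, hnb⟩)
      · exact Or.inl rfl
      · exact Or.inr ⟨hadj.symm, fun w h1 h2 => (hnb w h2 h1).symm⟩
    · rintro u v w (rfl | huv) (rfl | hvw)
      · exact Or.inl rfl
      · exact Or.inr hvw
      · exact Or.inr huv
      · by_cases huw : u = w
        · exact Or.inl huw
        · refine Or.inr ⟨(hvw.2 u huv.1.ne huw).mp huv.1, fun x hxu hxw => ?_⟩
          by_cases hxv : x = v
          · subst hxv
            exact iff_of_true huv.1.symm hvw.1
          · exact (huv.2 x hxu hxv).trans (hvw.2 x hxv hxw)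

/-- The *twin-quotient* of `G`: vertices are twin-equivalence classes, two distinct
classes being adjacent iff some representatives are adjacent in `G`. -/
def twinQuotient {V : Type*} (G : SimpleGraph V) :
    SimpleGraph (Quotient (twinSetoid G)) where
  Adj C D := C ≠ D ∧ ∃ u v : V,
    Quotient.mk (twinSetoid G) u = C ∧ Quotient.mk (twinSetoid G) v = D ∧ G.Adj u v
  symm := by
    constructor
    rintro C D ⟨hne, u, v, hu, hv, hadj⟩
    exact ⟨hne.symm, v, u, hv, hu, hadj.symm⟩
  loopless := by constructor; rintro C ⟨hne, -⟩; exact hne rfl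

/-- The line graph of a multigraph given by an endpoint map `ends : E' → Sym2 V'`:
the vertices are the edges `E'`, two distinct edges being adjacent iff their endpoint
pairs share a common vertex. -/
def multiLineGraph {V' E' : Type*} (ends : E' → Sym2 V') : SimpleGraph E' where
  Adj e f := e ≠ f ∧ ∃ x, x ∈ ends e ∧ x ∈ ends f
  symm := by constructor; rintro e f ⟨hne, x, hxe, hxf⟩; exact ⟨hne.symm, x, hxf, hxe⟩
  loopless := by constructor; rintro e ⟨hne, -⟩; exact hne rfl

section Aux

variable {V : Type*} {G : SimpleGraph V}

lemma TrueTwins.ne {u v : V} (h : TrueTwins G u v) : u ≠ v := h.1.ne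

lemma TrueTwins.symm {u v : V} (h : TrueTwins G u v) : TrueTwins G v u :=
  ⟨h.1.symm, fun w h1 h2 => (h.2 w h2 h1).symm⟩

lemma TrueTwins.adj_of_adj {u u' v : V} (h : TrueTwins G u u') (hadj : G.Adj u' v)
    (hvu : v ≠ u) : G.Adj u v := by
  by_cases hvu' : v = u'
  · subst hvu'; exact h.1
  · exact ((h.2 v hvu hvu').mpr hadj.symm).symm

lemma rel_adj {u u' v v' : V} (hu : (twinSetoid G).r u u') (hv : (twinSetoid G).r v v')
    (h : G.Adj u' v') (huv : ¬ (twinSetoid G).r u v) : G.Adj u v := by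
  have hvu : v' ≠ u := by
    rintro rfl
    exact huv ((twinSetoid G).symm hv)
  have h1 : G.Adj u v' := by
    rcases hu with rfl | hu
    · exact h
    · exact hu.adj_of_adj h hvu
  have hun : u ≠ v := fun e => huv (e ▸ (twinSetoid G).refl u)
  have h2 : G.Adj v u := by
    rcases hv with rfl | hv
    · exact h1.symm
    · exact hv.adj_of_adj h1.symm hun
  exact h2.symm

lemma twinQuotient_adj_iff {u v : V} (h : ¬ (twinSetoid G).r u v) :
    (twinQuotient G).Adj (Quotient.mk (twinSetoid G) u) (Quotient.mk (twinSetoid G) v) ↔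
      G.Adj u v := by
  constructor
  · rintro ⟨hne, a, b, ha, hb, hab⟩
    exact rel_adj ((twinSetoid G).symm (Quotient.exact ha)) ((twinSetoid G).symm (Quotient.exact hb)) hab h
  · intro hadj
    exact ⟨fun e => h (Quotient.exact e), u, v, rfl, rfl, hadj⟩

variable {V₂ : Type*} {G₂ : SimpleGraph V₂}

lemma TrueTwins.map (φ : G ≃g G₂) {u v : V} (h : TrueTwins G u v) :
    TrueTwins G₂ (φ u) (φ v) := by
  refine ⟨φ.map_adj_iff.mpr h.1, fun w hw1 hw2 => ?_⟩
  obtain ⟨w₀, rfl⟩ := φ.toEquiv.surjective w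
  rw [show φ.toEquiv w₀ = φ w₀ from rfl, φ.map_adj_iff, φ.map_adj_iff]
  exact h.2 w₀ (fun e => hw1 (congrArg φ e)) (fun e => hw2 (congrArg φ e))

lemma rel_map (φ : G ≃g G₂) {u v : V} (h : (twinSetoid G).r u v) :
    (twinSetoid G₂).r (φ u) (φ v) := by
  rcases h with rfl | h
  · exact Or.inl rfl
  · exact Or.inr (h.map φ)

lemma rel_map_iff (φ : G ≃g G₂) {u v : V} :
    (twinSetoid G₂).r (φ u) (φ v) ↔ (twinSetoid G).r u v := by
  refine ⟨fun h => ?_, rel_map φ⟩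
  have := rel_map φ.symm h
  simpa using this

noncomputable def twinQuotientIso (φ : G ≃g G₂) : twinQuotient G ≃g twinQuotient G₂ := by
  refine ⟨Quotient.congr φ.toEquiv (fun a b => (rel_map_iff φ).symm), ?_⟩
  rintro C D
  induction C using Quotient.ind with | _ a =>
  induction D using Quotient.ind with | _ b =>
  show (twinQuotient G₂).Adj (Quotient.mk _ (φ a)) (Quotient.mk _ (φ b)) ↔
    (twinQuotient G).Adj (Quotient.mk _ a) (Quotient.mk _ b)
  by_cases hr : (twinSetoid G).r a b
  · constructor
    · rintro ⟨hne, -⟩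
      exact absurd (Quotient.sound (rel_map φ hr)) hne
    · rintro ⟨hne, -⟩
      exact absurd (Quotient.sound hr) hne
  · have hr2 : ¬ (twinSetoid G₂).r (φ a) (φ b) := fun h => hr ((rel_map_iff φ).mp h)
    rw [twinQuotient_adj_iff hr, twinQuotient_adj_iff hr2, φ.map_adj_iff]

end Aux
section Fwd

variable {V' E' : Type*} (ends : E' → Sym2 V')

lemma parallel_twins {e f : E'} (hne : e ≠ f) (hpar : ends e = ends f) :
    TrueTwins (multiLineGraph ends) e f := by
  refine ⟨⟨hne, (ends e).out.1, Sym2.out_fst_mem _, hpar ▸ Sym2.out_fst_mem _⟩, fun g h1 h2 => ?_⟩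
  constructor
  · rintro ⟨-, x, hx1, hx2⟩
    exact ⟨h2, x, hx1, hpar ▸ hx2⟩
  · rintro ⟨-, x, hx1, hx2⟩
    exact ⟨h1, x, hx1, hpar ▸ hx2⟩

/-- `x` is a pendant vertex with unique incident edge `e`. -/
def IsPendant (x : V') (e : E') : Prop := x ∈ ends e ∧ ∀ f, x ∈ ends f → f = e

/-- Merge pendant vertices whose unique edges are true twins. -/
def ptSetoid : Setoid V' where
  r x y := x = y ∨ ∃ ex ey, IsPendant ends x ex ∧ IsPendant ends y ey ∧
    TrueTwins (multiLineGraph ends) ex ey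
  iseqv := by
    constructor
    · exact fun x => Or.inl rfl
    · rintro x y (rfl | ⟨ex, ey, px, py, t⟩)
      · exact Or.inl rfl
      · exact Or.inr ⟨ey, ex, py, px, t.symm⟩
    · rintro x y z (rfl | ⟨ex, ey, px, py, t1⟩) (rfl | h2)
      · exact Or.inl rfl
      · exact Or.inr h2
      · exact Or.inr ⟨ex, ey, px, py, t1⟩
      · obtain ⟨ey', ez, py', pz, t2⟩ := h2
        obtain rfl : ey' = ey := py.2 ey' py'.1
        by_cases hxz : x = z
        · exact Or.inl hxz
        · have hexez : ex ≠ ez := by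
            rintro rfl
            obtain ⟨-, w, hw1, hw2⟩ := t1.1
            have hex : ends ex = s(x, z) := (Sym2.mem_and_mem_iff hxz).mp ⟨px.1, pz.1⟩
            rw [hex, Sym2.mem_iff] at hw1
            rcases hw1 with rfl | rfl
            · exact t1.ne (px.2 _ hw2).symm
            · exact t1.ne (pz.2 _ hw2).symm
          have htr := (twinSetoid (multiLineGraph ends)).trans (Or.inr t1) (Or.inr t2)
          rcases htr with h | h
          · exact absurd h hexez
          · exact Or.inr ⟨ex, ez, px, pz, h⟩

/-- Endpoints for the quotient line graph: image of the ends of a class representative. -/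
noncomputable def ends2 : Quotient (twinSetoid (multiLineGraph ends)) → Sym2 (Quotient (ptSetoid ends)) :=
  fun C => Sym2.map (Quotient.mk (ptSetoid ends)) (ends C.out)

lemma out_rel {e : E'} {C : Quotient (twinSetoid (multiLineGraph ends))}
    (h : Quotient.mk (twinSetoid (multiLineGraph ends)) e = C) :
    (twinSetoid (multiLineGraph ends)).r e C.out := by
  subst h
  exact Quotient.exact (Quotient.out_eq _).symm

lemma lemA {f e g : E'} (hfe : (twinSetoid (multiLineGraph ends)).r f e)
    (hgf : g ≠ f) (hge : g ≠ e) {v : V'} (hv1 : v ∈ ends g) (hv2 : v ∈ ends f) :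
    ∃ w, w ∈ ends g ∧ w ∈ ends e := by
  rcases hfe with rfl | ht
  · exact ⟨v, hv1, hv2⟩
  · exact ((ht.2 g hgf hge).mp ⟨hgf, v, hv1, hv2⟩).2


lemma ends2_shared_of_adj {C D : Quotient (twinSetoid (multiLineGraph ends))}
    (h : (twinQuotient (multiLineGraph ends)).Adj C D) :
    ∃ x, x ∈ ends2 ends C ∧ x ∈ ends2 ends D := by
  obtain ⟨hne, e, f, he, hf, hef⟩ := h
  obtain ⟨hef', v, hv1, hv2⟩ := hef
  have hce := out_rel ends he
  have hdf := out_rel ends hf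
  -- cross class inequalities
  have hkey : ∀ a b : E', Quotient.mk (twinSetoid (multiLineGraph ends)) a = C →
      Quotient.mk (twinSetoid (multiLineGraph ends)) b = D → a ≠ b := by
    rintro a b ha hb rfl
    exact hne (ha ▸ hb)
  have houtD : Quotient.mk (twinSetoid (multiLineGraph ends)) D.out = D := Quotient.out_eq _
  have houtC : Quotient.mk (twinSetoid (multiLineGraph ends)) C.out = C := Quotient.out_eq _
  obtain ⟨w, hw1, hw2⟩ := lemA ends hdf (hkey e f he hf) (hkey e D.out he houtD) hv1 hv2
  obtain ⟨w2, hw21, hw22⟩ := lemA ends hce (hkey e D.out he houtD).symm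
    (fun h => hkey C.out D.out houtC houtD h.symm) hw2 hw1
  exact ⟨Quotient.mk _ w2, Sym2.mem_map.mpr ⟨w2, hw22, rfl⟩, Sym2.mem_map.mpr ⟨w2, hw21, rfl⟩⟩

lemma eq_of_pt {C D : Quotient (twinSetoid (multiLineGraph ends))} {z z' : V'}
    (hz : z ∈ ends C.out) (hz' : z' ∈ ends D.out)
    (hpt : (ptSetoid ends).r z z') (hne : z ≠ z') : C = D := by
  rcases hpt with rfl | ⟨ez, ez', pz, pz', t⟩
  · exact absurd rfl hne
  · have h1 : C.out = ez := pz.2 _ hz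
    have h2 : D.out = ez' := pz'.2 _ hz'
    have : (twinSetoid (multiLineGraph ends)).r C.out D.out := h1 ▸ h2 ▸ Or.inr t
    rw [← Quotient.out_eq C, ← Quotient.out_eq D]
    exact Quotient.sound this

lemma adj_of_ends2_shared {C D : Quotient (twinSetoid (multiLineGraph ends))}
    (hne : C ≠ D) {x : Quotient (ptSetoid ends)}
    (h1 : x ∈ ends2 ends C) (h2 : x ∈ ends2 ends D) :
    (twinQuotient (multiLineGraph ends)).Adj C D := by
  obtain ⟨z, hz, rfl⟩ := Sym2.mem_map.mp h1
  obtain ⟨z', hz', hzz⟩ := Sym2.mem_map.mp h2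
  have hpt : (ptSetoid ends).r z z' := Quotient.exact hzz.symm
  by_cases hzeq : z = z'
  · subst hzeq
    refine ⟨hne, C.out, D.out, Quotient.out_eq _, Quotient.out_eq _, ?_, z, hz, hz'⟩
    intro h
    exact hne (by rw [← Quotient.out_eq C, ← Quotient.out_eq D, h])
  · exact absurd (eq_of_pt ends hz hz' hpt hzeq) hne

lemma sym2_exists_rep {α : Type*} (p : Sym2 α) : ∃ x y, p = s(x, y) := by
  induction p using Sym2.inductionOn with
  | _ x y => exact ⟨x, y, rfl⟩

lemma ends2_not_isDiag (hnd : ∀ e, ¬ (ends e).IsDiag) (C : Quotient (twinSetoid (multiLineGraph ends))) :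
    ¬ (ends2 ends C).IsDiag := by
  intro h
  obtain ⟨x, y, hxy⟩ := sym2_exists_rep (ends C.out)
  have hnexy : x ≠ y := fun e => hnd C.out (by rw [hxy, e]; exact Sym2.mk_isDiag_iff.mpr rfl)
  simp only [ends2, hxy, Sym2.map_pair_eq, Sym2.mk_isDiag_iff] at h
  rcases Quotient.exact h with rfl | ⟨ex, ey, px, py, t⟩
  · exact hnexy rfl
  · have h1 : C.out = ex := px.2 _ (by rw [hxy]; exact Sym2.mem_mk_left x y)
    have h2 : C.out = ey := py.2 _ (by rw [hxy]; exact Sym2.mem_mk_right x y)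
    exact t.ne (h1 ▸ h2 ▸ rfl)

lemma ends2_injective : Function.Injective (ends2 ends) := by
  intro C D h
  obtain ⟨x, y, hC⟩ := sym2_exists_rep (ends C.out)
  obtain ⟨x', y', hD⟩ := sym2_exists_rep (ends D.out)
  have hxC : x ∈ ends C.out := by rw [hC]; exact Sym2.mem_mk_left x y
  have hyC : y ∈ ends C.out := by rw [hC]; exact Sym2.mem_mk_right x y
  have hxD : x' ∈ ends D.out := by rw [hD]; exact Sym2.mem_mk_left x' y'
  have hyD : y' ∈ ends D.out := by rw [hD]; exact Sym2.mem_mk_right x' y'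
  have key : ∀ a b : V', a ∈ ends C.out → b ∈ ends D.out →
      Quotient.mk (ptSetoid ends) a = Quotient.mk (ptSetoid ends) b → a = b ∨ C = D := by
    intro a b ha hb hq
    by_cases hab : a = b
    · exact Or.inl hab
    · exact Or.inr (eq_of_pt ends ha hb (Quotient.exact hq) hab)
  have hpar : ends C.out = ends D.out → C = D := by
    intro hp
    by_cases hout : C.out = D.out
    · rw [← Quotient.out_eq C, ← Quotient.out_eq D, hout]
    · rw [← Quotient.out_eq C, ← Quotient.out_eq D]
      exact Quotient.sound (Or.inr (parallel_twins ends hout hp))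
  simp only [ends2, hC, hD, Sym2.map_pair_eq, Sym2.eq_iff] at h
  rcases h with ⟨h1, h2⟩ | ⟨h1, h2⟩
  · rcases key x x' hxC hxD h1 with rfl | hCD
    · rcases key y y' hyC hyD h2 with rfl | hCD
      · exact hpar (by rw [hC, hD])
      · exact hCD
    · exact hCD
  · rcases key x y' hxC hyD h1 with rfl | hCD
    · rcases key y x' hyC hxD h2 with rfl | hCD
      · exact hpar (by rw [hC, hD, Sym2.eq_swap])
      · exact hCD
    · exact hCD

/-- The twin quotient of a multigraph line graph is the multigraph line graph of `ends2`. -/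
noncomputable def iso2 :
    twinQuotient (multiLineGraph ends) ≃g multiLineGraph (ends2 ends) := by
  refine ⟨Equiv.refl _, fun {C D} => ?_⟩
  show (multiLineGraph (ends2 ends)).Adj C D ↔ (twinQuotient (multiLineGraph ends)).Adj C D
  constructor
  · rintro ⟨hne, x, h1, h2⟩
    exact adj_of_ends2_shared ends hne h1 h2
  · intro h
    obtain ⟨x, h1, h2⟩ := ends2_shared_of_adj ends h
    exact ⟨h.1, x, h1, h2⟩

/-- A multigraph line graph with injective, non-diagonal ends map is a simple line graph. -/
noncomputable def iso3 (hnd : ∀ e, ¬ (ends e).IsDiag) :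
    multiLineGraph (ends2 ends) ≃g
      (SimpleGraph.fromEdgeSet (Set.range (ends2 ends))).lineGraph := by
  have hmem : ∀ C, ends2 ends C ∈ (SimpleGraph.fromEdgeSet (Set.range (ends2 ends))).edgeSet := by
    intro C
    rw [SimpleGraph.edgeSet_fromEdgeSet]
    exact ⟨⟨C, rfl⟩, ends2_not_isDiag ends hnd C⟩
  have hbij : Function.Bijective
      (fun C => (⟨ends2 ends C, hmem C⟩ :
        (SimpleGraph.fromEdgeSet (Set.range (ends2 ends))).edgeSet)) := by
    constructor
    · intro C D h
      exact ends2_injective ends (congrArg Subtype.val h)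
    · rintro ⟨p, hp⟩
      rw [SimpleGraph.edgeSet_fromEdgeSet] at hp
      obtain ⟨⟨C, hC⟩, -⟩ := hp
      exact ⟨C, Subtype.ext hC⟩
  refine ⟨Equiv.ofBijective _ hbij, fun {C D} => ?_⟩
  rw [SimpleGraph.lineGraph_adj_iff_exists]
  constructor
  · rintro ⟨hne, x, h1, h2⟩
    exact ⟨fun e => hne (by rw [e]), x, h1, h2⟩
  · rintro ⟨hne, x, h1, h2⟩
    exact ⟨Subtype.coe_ne_coe.mp (fun e => hne (ends2_injective ends e)), x, h1, h2⟩

end Fwd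

/-- A simple graph `G` is a line graph of a multigraph iff its twin-quotient is
isomorphic to the line graph of some simple graph. -/
theorem isLineGraphOfMultigraph_iff_twinQuotient_lineGraph {V : Type u}
    (G : SimpleGraph V) :
    (∃ (V' E' : Type u) (ends : E' → Sym2 V'),
        (∀ e, ¬ (ends e).IsDiag) ∧ Nonempty (G ≃g multiLineGraph ends)) ↔
    (∃ (W : Type u) (H' : SimpleGraph W),
        Nonempty (twinQuotient G ≃g H'.lineGraph)) := by
  constructor
  · rintro ⟨V', E', ends, hnd, ⟨φ⟩⟩
    exact ⟨Quotient (ptSetoid ends), SimpleGraph.fromEdgeSet (Set.range (ends2 ends)),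
      ⟨((twinQuotientIso φ).trans (iso2 ends)).trans (iso3 ends hnd)⟩⟩
  · rintro ⟨W, H', ⟨φ⟩⟩
    refine ⟨W, V, fun v => (φ (Quotient.mk (twinSetoid G) v) : Sym2 W),
      fun v => H'.not_isDiag_of_mem_edgeSet (φ _).2, ⟨⟨Equiv.refl V, fun {u v} => ?_⟩⟩⟩
    show (multiLineGraph _).Adj u v ↔ G.Adj u v
    by_cases hr : (twinSetoid G).r u v
    · rcases hr with rfl | ht
      · constructor
        · rintro ⟨hne, -⟩; exact absurd rfl hne
        · intro h; exact absurd rfl h.ne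
      · constructor
        · intro _; exact ht.1
        · intro _
          refine ⟨ht.ne, ?_⟩
          have hq : Quotient.mk (twinSetoid G) u = Quotient.mk (twinSetoid G) v :=
            Quotient.sound (Or.inr ht)
          show ∃ x, x ∈ (φ (Quotient.mk (twinSetoid G) u) : Sym2 W) ∧
              x ∈ (φ (Quotient.mk (twinSetoid G) v) : Sym2 W)
          rw [hq]
          exact ⟨_, Sym2.out_fst_mem _, Sym2.out_fst_mem _⟩
    · have hne : Quotient.mk (twinSetoid G) u ≠ Quotient.mk (twinSetoid G) v :=
        fun e => hr (Quotient.exact e)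
      rw [← twinQuotient_adj_iff hr, ← φ.map_adj_iff, SimpleGraph.lineGraph_adj_iff_exists]
      constructor
      · rintro ⟨-, x, h1, h2⟩
        exact ⟨fun e => hne (φ.toEquiv.injective (Subtype.ext (congrArg Subtype.val e))), x, h1, h2⟩
      · rintro ⟨-, x, h1, h2⟩
        exact ⟨fun e => hne (congrArg _ e), x, h1, h2⟩
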